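/- For a traceless symmetric bilinear form E on an n-dimensional real inner product space (n ≥ 2), the trace of E³ satisfies tr(E³) ≤ ((n-2)/√(n(n-1))) · |E|³, where |E| is the Frobenius norm of E. -/

import Mathlib

open Finset

/-- Trace of a linear map diagonal on a basis. -/
lemma trace_of_diagonal_basis {n : ℕ} {V : Type*} [AddCommGroup V] [Module ℝ V]
    (b : Module.Basis (Fin n) ℝ V) (T : V →ₗ[ℝ] V) (μ : Fin n → ℝ)
    (h : ∀ i, T (b i) = μ i • b i) :
    LinearMap.trace ℝ V T = ∑ i, μ i := by
  classical
  rw [LinearMap.trace_eq_matrix_trace ℝ b, Matrix.trace]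
  congr 1
  funext i
  simp [Matrix.diag, LinearMap.toMatrix_apply, h, Module.Basis.repr_self]

/-- Scalar Huisken inequality: if `∑ x = 0` then
`∑ x³ ≤ (n-2)/√(n(n-1)) · (∑ x²)^{3/2}`. -/
lemma huisken_scalar (n : ℕ) (hn : 2 ≤ n) (x : Fin n → ℝ)
    (hsum : ∑ i, x i = 0) :
    ∑ i, (x i) ^ 3 ≤ (((n : ℝ) - 2) / Real.sqrt (n * (n - 1))) *
      (Real.sqrt (∑ i, (x i) ^ 2)) ^ 3 := by
  classical
  have hn1 : (1 : ℝ) ≤ (n : ℝ) := by exact_mod_cast Nat.one_le_of_lt hn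
  have hn2 : (2 : ℝ) ≤ (n : ℝ) := by exact_mod_cast hn
  have hnpos : (0 : ℝ) < (n : ℝ) := by linarith
  have hn1pos : (0 : ℝ) < (n : ℝ) - 1 := by linarith
  set s : ℝ := ∑ i, (x i) ^ 2 with hs
  have hs0 : 0 ≤ s := Finset.sum_nonneg fun i _ => sq_nonneg _
  set q : ℝ := Real.sqrt (s / (n * (n - 1))) with hqdef
  have hq0 : 0 ≤ q := Real.sqrt_nonneg _
  have hq2 : q ^ 2 = s / (n * (n - 1)) := by
    rw [hqdef, sq, Real.mul_self_sqrt (by positivity)]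
  have hseq : s = n * ((n : ℝ) - 1) * q ^ 2 := by
    rw [hq2]; field_simp
  set M : ℝ := ((n : ℝ) - 1) * q with hMdef
  have hM0 : 0 ≤ M := by positivity
  -- each x i ≤ M
  have hxle : ∀ i, x i ≤ M := by
    intro i
    have hrest : ∑ j ∈ univ.erase i, x j = - x i := by
      have := Finset.add_sum_erase univ x (Finset.mem_univ i)
      linarith [hsum, this]
    have hcs := sq_sum_le_card_mul_sum_sq (s := univ.erase i) (f := x)
    have hcard : ((univ.erase i).card : ℝ) = (n : ℝ) - 1 := by
      rw [Finset.card_erase_of_mem (Finset.mem_univ i)]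
      simp [Nat.cast_sub (Nat.one_le_of_lt hn)]
    have hresq : ∑ j ∈ univ.erase i, (x j) ^ 2 = s - (x i) ^ 2 := by
      have h := Finset.add_sum_erase univ (fun j => (x j) ^ 2) (Finset.mem_univ i)
      linarith
    rw [hrest, hcard, hresq] at hcs
    have hxi2 : (x i) ^ 2 ≤ M ^ 2 := by
      have hM2 : M ^ 2 = ((n : ℝ) - 1) * s / n := by
        rw [hMdef, mul_pow, hq2]; field_simp
      rw [hM2, le_div_iff₀ hnpos]
      nlinarith [hcs]
    calc x i ≤ |x i| := le_abs_self _
      _ = Real.sqrt ((x i) ^ 2) := (Real.sqrt_sq_eq_abs _).symm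
      _ ≤ Real.sqrt (M ^ 2) := Real.sqrt_le_sqrt hxi2
      _ = M := by rw [Real.sqrt_sq hM0]
  -- pointwise cubic bound
  have hpt : ∀ i, (x i) ^ 3 ≤
      (M - 2 * q) * (x i) ^ 2 + (2 * M * q - q ^ 2) * (x i) + M * q ^ 2 := by
    intro i
    have h1 : (x i - M) * (x i + q) ^ 2 ≤ 0 :=
      mul_nonpos_of_nonpos_of_nonneg (by linarith [hxle i]) (sq_nonneg _)
    nlinarith [h1]
  have hbound : ∑ i, (x i) ^ 3 ≤ (M - 2 * q) * s + n * (M * q ^ 2) := by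
    calc ∑ i, (x i) ^ 3
        ≤ ∑ i, ((M - 2 * q) * (x i) ^ 2 + (2 * M * q - q ^ 2) * (x i) + M * q ^ 2) :=
          Finset.sum_le_sum fun i _ => hpt i
      _ = (M - 2 * q) * s + (2 * M * q - q ^ 2) * (∑ i, x i) + n * (M * q ^ 2) := by
          simp [Finset.sum_add_distrib, ← Finset.mul_sum, Finset.card_univ, hs]
      _ = (M - 2 * q) * s + n * (M * q ^ 2) := by rw [hsum]; ring
  -- compute the RHS
  have hA : (0 : ℝ) < Real.sqrt ((n : ℝ) * ((n : ℝ) - 1)) := Real.sqrt_pos.mpr (by positivity)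
  have hA2 : Real.sqrt ((n : ℝ) * ((n : ℝ) - 1)) ^ 2 = (n : ℝ) * ((n : ℝ) - 1) :=
    Real.sq_sqrt (by positivity)
  have hsqrt_s : Real.sqrt s = Real.sqrt ((n : ℝ) * ((n : ℝ) - 1)) * q := by
    rw [hseq, Real.sqrt_mul (by positivity), Real.sqrt_sq hq0]
  have hrhs : (((n : ℝ) - 2) / Real.sqrt ((n : ℝ) * ((n : ℝ) - 1))) * (Real.sqrt s) ^ 3
      = ((n : ℝ) - 2) * ((n : ℝ) * ((n : ℝ) - 1)) * q ^ 3 := by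
    have hA3 : Real.sqrt ((n : ℝ) * ((n : ℝ) - 1)) ^ 3
        = ((n : ℝ) * ((n : ℝ) - 1)) * Real.sqrt ((n : ℝ) * ((n : ℝ) - 1)) := by
      rw [pow_succ, hA2]
    rw [hsqrt_s, div_mul_eq_mul_div, div_eq_iff hA.ne', mul_pow, hA3]
    ring
  rw [hrhs]
  have : (M - 2 * q) * s + n * (M * q ^ 2)
      = ((n : ℝ) - 2) * ((n : ℝ) * ((n : ℝ) - 1)) * q ^ 3 := by
    rw [hseq, hMdef]; ring
  linarith [hbound]

/-- Huisken's inequality: for a traceless symmetric (self-adjoint) endomorphism `E`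
of an `n`-dimensional real inner product space (`n ≥ 2`),
`tr (E³) ≤ ((n-2)/√(n(n-1))) · |E|³`, where `|E| = √(tr (E²))`. -/
theorem traceCube_le_of_traceless_symmetric
    (n : ℕ) (hn : 2 ≤ n) (V : Type*) [NormedAddCommGroup V] [InnerProductSpace ℝ V]
    [FiniteDimensional ℝ V] (hdim : Module.finrank ℝ V = n)
    (E : V →ₗ[ℝ] V) (hE : LinearMap.IsSymmetric E)
    (htr : LinearMap.trace ℝ V E = 0) :
    LinearMap.trace ℝ V (E ∘ₗ E ∘ₗ E) ≤
      (((n : ℝ) - 2) / Real.sqrt (n * (n - 1))) *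
        (Real.sqrt (LinearMap.trace ℝ V (E ∘ₗ E))) ^ 3 := by
  classical
  set b := (hE.eigenvectorBasis hdim).toBasis with hb
  set μ := hE.eigenvalues hdim with hμ
  have happ : ∀ i, E (b i) = μ i • b i := by
    intro i
    simpa [hb, hμ] using hE.apply_eigenvectorBasis hdim i
  have happ2 : ∀ i, (E ∘ₗ E) (b i) = (μ i) ^ 2 • b i := by
    intro i
    simp [LinearMap.comp_apply, happ i, map_smul, smul_smul, sq]
  have happ3 : ∀ i, (E ∘ₗ E ∘ₗ E) (b i) = (μ i) ^ 3 • b i := by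
    intro i
    simp [LinearMap.comp_apply, happ i, map_smul, smul_smul]
    ring_nf
  have h1 : ∑ i, μ i = 0 := by
    rw [← trace_of_diagonal_basis b E μ happ, htr]
  have h2 : LinearMap.trace ℝ V (E ∘ₗ E) = ∑ i, (μ i) ^ 2 :=
    trace_of_diagonal_basis b _ _ happ2
  have h3 : LinearMap.trace ℝ V (E ∘ₗ E ∘ₗ E) = ∑ i, (μ i) ^ 3 :=
    trace_of_diagonal_basis b _ _ happ3
  rw [h2, h3]
  exact huisken_scalar n hn μ h1
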